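/- Assume the abstract reduced crossed product setup for an action α : Γ → Aut(A) with (SAveP), with ambient C*-algebra B, unitaries (u_t), and conditional expectation E : B → A, and assume in addition that E is faithful: for x ∈ B, E(x* x) = 0 implies x = 0. Let Λ be a subgroup of Γ such that the restricted action of Λ on A is minimal, i.e., the only closed two-sided ideals I of A satisfying α_s(I) ⊆ I for all s ∈ Λ are {0} and A. Let D be any norm-closed *-subalgebra of B containing A and {u_t : t ∈ Λ}. Then D is simple: every closed two-sided ideal of D is {0} or D. (In particular, the inclusion A ⋊_r Λ ⊆ A ⋊_r Γ is C*-irreducible.) -/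

import Mathlib

/-- For a unital C*-subalgebra `A` of `B`, a map `f` on `A`, and `b ∈ B`, the norm-closed
convex hull in `B` of `{v * b * star (f v) : v a unitary element of A}`.  For `f = id`
this is `C_A(b)`; for `f = β` an automorphism of `A` it is `C_A^β(b)`. -/
def relC {B : Type*} [NormedRing B] [StarRing B] [CStarRing B] [NormedAlgebra ℂ B]
    [CompleteSpace B] [StarModule ℂ B]
    (A : StarSubalgebra ℂ B) (f : ↥A → ↥A) (b : B) : Set B :=
  closure (convexHull ℝ
    {y : B | ∃ v : ↥A, v ∈ unitary ↥A ∧ y = (v : B) * b * star ((f v : ↥A) : B)})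

set_option linter.unusedSectionVars false
set_option maxHeartbeats 1000000

namespace IntSimpAux

variable {B : Type*} [NormedRing B] [StarRing B] [CStarRing B] [NormedAlgebra ℂ B]
    [CompleteSpace B] [StarModule ℂ B]

/-- A finite averaging operator `x ↦ ∑ wᵢ vᵢ x vᵢ*` with `vᵢ` unitaries in `A`. -/
structure Avg (A : StarSubalgebra ℂ B) where
  ι : Type
  t : Finset ι
  w : ι → ℝ
  v : ι → B
  hw : ∀ i ∈ t, 0 ≤ w i
  hsum : ∑ i ∈ t, w i = 1
  hvA : ∀ i ∈ t, v i ∈ A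
  hvu : ∀ i ∈ t, v i ∈ unitary B

variable {A : StarSubalgebra ℂ B}

lemma coe_mem_unitary (a : ↥A) (h : a ∈ unitary ↥A) : (a : B) ∈ unitary B := by
  rw [Unitary.mem_iff] at h ⊢
  constructor
  · simpa using congrArg (Subtype.val) h.1
  · simpa using congrArg (Subtype.val) h.2

noncomputable def Avg.app (Ψ : Avg A) (x : B) : B :=
  ∑ i ∈ Ψ.t, Ψ.w i • (Ψ.v i * x * star (Ψ.v i))

lemma Avg.app_add (Ψ : Avg A) (x y : B) : Ψ.app (x + y) = Ψ.app x + Ψ.app y := by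
  simp [Avg.app, mul_add, add_mul, smul_add, Finset.sum_add_distrib]

lemma Avg.app_smul (Ψ : Avg A) (c : ℂ) (x : B) : Ψ.app (c • x) = c • Ψ.app x := by
  simp only [Avg.app, Finset.smul_sum, mul_smul_comm, smul_mul_assoc]
  exact Finset.sum_congr rfl fun i _ => smul_comm _ _ _

lemma Avg.app_zero (Ψ : Avg A) : Ψ.app 0 = 0 := by
  simp [Avg.app]

lemma Avg.app_sub (Ψ : Avg A) (x y : B) : Ψ.app (x - y) = Ψ.app x - Ψ.app y := by
  have h := Ψ.app_add (x - y) y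
  simp only [sub_add_cancel] at h
  rw [h]; abel

lemma Avg.app_one (Ψ : Avg A) : Ψ.app 1 = 1 := by
  have : ∀ i ∈ Ψ.t, Ψ.w i • (Ψ.v i * 1 * star (Ψ.v i)) = Ψ.w i • (1 : B) := by
    intro i hi
    rw [mul_one, (Unitary.mem_iff.mp (Ψ.hvu i hi)).2]
  rw [Avg.app, Finset.sum_congr rfl this, ← Finset.sum_smul, Ψ.hsum, one_smul]

lemma Avg.app_norm_le [Nontrivial B] (Ψ : Avg A) (x : B) : ‖Ψ.app x‖ ≤ ‖x‖ := by
  calc ‖Ψ.app x‖ ≤ ∑ i ∈ Ψ.t, ‖Ψ.w i • (Ψ.v i * x * star (Ψ.v i))‖ :=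
        norm_sum_le _ _
    _ ≤ ∑ i ∈ Ψ.t, Ψ.w i * ‖x‖ := by
        refine Finset.sum_le_sum fun i hi => ?_
        rw [norm_smul, Real.norm_eq_abs, abs_of_nonneg (Ψ.hw i hi)]
        refine mul_le_mul_of_nonneg_left ?_ (Ψ.hw i hi)
        calc ‖Ψ.v i * x * star (Ψ.v i)‖ ≤ ‖Ψ.v i * x‖ * ‖star (Ψ.v i)‖ := norm_mul_le _ _
          _ ≤ ‖Ψ.v i‖ * ‖x‖ * ‖star (Ψ.v i)‖ := by
              gcongr; exact norm_mul_le _ _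
          _ = ‖x‖ := by
              rw [norm_star, CStarRing.norm_of_mem_unitary (Ψ.hvu i hi)]
              ring
    _ = ‖x‖ := by rw [← Finset.sum_mul, Ψ.hsum, one_mul]

noncomputable def appList (L : List (Avg A)) (x : B) : B :=
  L.foldl (fun y Ψ => Ψ.app y) x

@[simp] lemma appList_nil (x : B) : appList ([] : List (Avg A)) x = x := rfl

@[simp] lemma appList_cons (Ψ : Avg A) (L : List (Avg A)) (x : B) :
    appList (Ψ :: L) x = appList L (Ψ.app x) := rfl

lemma appList_append (L₁ L₂ : List (Avg A)) (x : B) :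
    appList (L₁ ++ L₂) x = appList L₂ (appList L₁ x) := by
  simp [appList, List.foldl_append]

lemma appList_add (L : List (Avg A)) (x y : B) :
    appList L (x + y) = appList L x + appList L y := by
  induction L generalizing x y with
  | nil => rfl
  | cons Ψ L ih => simp [appList_cons, Ψ.app_add, ih]

lemma appList_sub (L : List (Avg A)) (x y : B) :
    appList L (x - y) = appList L x - appList L y := by
  induction L generalizing x y with
  | nil => rfl
  | cons Ψ L ih => simp [appList_cons, Ψ.app_sub, ih]

lemma appList_smul (L : List (Avg A)) (c : ℂ) (x : B) :
    appList L (c • x) = c • appList L x := by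
  induction L generalizing x with
  | nil => rfl
  | cons Ψ L ih => simp [appList_cons, Ψ.app_smul, ih]

lemma appList_zero (L : List (Avg A)) : appList L (0 : B) = 0 := by
  induction L with
  | nil => rfl
  | cons Ψ L ih => simp [appList_cons, Ψ.app_zero, ih]

lemma appList_one (L : List (Avg A)) : appList L (1 : B) = 1 := by
  induction L with
  | nil => rfl
  | cons Ψ L ih => simp [appList_cons, Ψ.app_one, ih]

lemma appList_norm_le [Nontrivial B] (L : List (Avg A)) (x : B) :
    ‖appList L x‖ ≤ ‖x‖ := by
  induction L generalizing x with
  | nil => simp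
  | cons Ψ L ih => exact le_trans (ih (Ψ.app x)) (Ψ.app_norm_le x)

end IntSimpAux
open IntSimpAux in
/-- Theorem 3.4 (i). -/
theorem intermediate_algebras_simple
    {B : Type*} [NormedRing B] [StarRing B] [CStarRing B] [NormedAlgebra ℂ B]
    [CompleteSpace B] [StarModule ℂ B]
    {Γ : Type*} [Group Γ]
    (A : StarSubalgebra ℂ B) (hA : IsClosed (A : Set B))
    (u : Γ →* unitary B)
    (α : Γ → (↥A ≃⋆ₐ[ℂ] ↥A))
    (hαu : ∀ (t : Γ) (a : ↥A), ((α t a : ↥A) : B) = (u t : B) * (a : B) * star (u t : B))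
    (hdense : Dense (↑(Submodule.span ℂ
      {x : B | ∃ a ∈ A, ∃ t : Γ, x = a * (u t : B)}) : Set B))
    (E : B →L[ℂ] B) (hEmem : ∀ x : B, E x ∈ A) (hEnorm : ‖E‖ ≤ 1)
    (hEe : ∀ a ∈ A, E (a * (u 1 : B)) = a)
    (hEt : ∀ a ∈ A, ∀ t : Γ, t ≠ 1 → E (a * (u t : B)) = 0)
    (hEfaithful : ∀ x : B, E (star x * x) = 0 → x = 0)
    (hSAveP : ∀ t : Γ, t ≠ 1 → ∀ b ∈ A, (0 : B) ∈ relC A (⇑(α t)) b)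
    (Λ : Subgroup Γ)
    (hmin : ∀ I : TwoSidedIdeal ↥A, IsClosed (I : Set ↥A) →
      (∀ s ∈ Λ, ∀ x : ↥A, x ∈ I → α s x ∈ I) → I = ⊥ ∨ I = ⊤)
    (D : StarSubalgebra ℂ B) (hD : IsClosed (D : Set B))
    (hAD : A ≤ D) (hUD : ∀ t ∈ Λ, (u t : B) ∈ D) :
    ∀ J : TwoSidedIdeal ↥D, IsClosed (J : Set ↥D) → J = ⊥ ∨ J = ⊤ := by
  classical
  intro J hJclosed
  rcases subsingleton_or_nontrivial B with hB | hB
  · left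
    haveI : Subsingleton ↥D := ⟨fun a b => Subtype.ext (Subsingleton.elim _ _)⟩
    refine SetLike.ext fun z => ?_
    have hz : z = 0 := Subsingleton.elim z 0
    simp [hz, TwoSidedIdeal.mem_bot]
  by_cases hJbot : J = ⊥
  · exact Or.inl hJbot
  right
  -- ### basic algebraic facts
  have hu1 : ((u 1 : unitary B) : B) = 1 := by rw [map_one]; rfl
  have hstar_mul : ∀ t : Γ, star ((u t : B)) * (u t : B) = 1 := fun t => by
    simpa using unitary.coe_star_mul_self (u t)
  have hUstar : ∀ t : Γ, star ((u t : B)) = ((u t⁻¹ : unitary B) : B) := by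
    intro t
    rw [map_inv, ← Unitary.star_eq_inv]
    exact (Unitary.coe_star).symm
  have hβmem : ∀ t : Γ, ∀ d : B, d ∈ A → (u t : B) * d * star (u t : B) ∈ A := by
    intro t d hd
    rw [← hαu t ⟨d, hd⟩]
    exact (α t ⟨d, hd⟩).2
  have hEA : ∀ c : B, c ∈ A → E c = c := by
    intro c hc
    have := hEe c hc
    rwa [hu1, mul_one] at this
  -- ### bimodularity of E
  have hbimod : ∀ c ∈ A, ∀ d ∈ A, ∀ x : B, E (c * x * d) = c * E x * d := by
    intro c hc d hd
    have heq : E.comp (((ContinuousLinearMap.mul ℂ B).flip d).comp (ContinuousLinearMap.mul ℂ B c))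
        = ((ContinuousLinearMap.mul ℂ B).flip d).comp ((ContinuousLinearMap.mul ℂ B c).comp E) := by
      refine ContinuousLinearMap.ext_on hdense ?_
      rintro x ⟨a, ha, t, rfl⟩
      simp only [ContinuousLinearMap.comp_apply, ContinuousLinearMap.flip_apply,
        ContinuousLinearMap.mul_apply']
      have hkey : c * (a * (u t : B)) * d
          = (c * a * ((u t : B) * d * star (u t : B))) * (u t : B) := by
        simp only [mul_assoc, hstar_mul t, mul_one]
      rw [hkey]
      by_cases ht : t = 1
      · subst ht
        rw [hEe _ (mul_mem (mul_mem hc ha) (hβmem 1 d hd)), hEe a ha]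
        simp [hu1]
      · rw [hEt _ (mul_mem (mul_mem hc ha) (hβmem t d hd)) t ht, hEt a ha t ht,
          mul_zero, zero_mul]
    intro x
    have := congrFun (congrArg (fun (f : B →L[ℂ] B) => (f : B → B)) heq) x
    simpa using this
  have hbimodL : ∀ c ∈ A, ∀ x : B, E (c * x) = c * E x := by
    intro c hc x
    have := hbimod c hc 1 (one_mem A) x
    simpa using this
  -- ### E commutes with conjugation by u s
  have hconj : ∀ s : Γ, ∀ x : B,
      E ((u s : B) * x * star (u s : B)) = (u s : B) * E x * star (u s : B) := by
    intro s
    have hcanc : ∀ X : B, star ((u s : B)) * ((u s : B) * X) = X := fun X => by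
      rw [← mul_assoc, hstar_mul s, one_mul]
    have heq : E.comp (((ContinuousLinearMap.mul ℂ B).flip (star (u s : B))).comp
          (ContinuousLinearMap.mul ℂ B (u s : B)))
        = ((ContinuousLinearMap.mul ℂ B).flip (star (u s : B))).comp
          ((ContinuousLinearMap.mul ℂ B (u s : B)).comp E) := by
      refine ContinuousLinearMap.ext_on hdense ?_
      rintro x ⟨a, ha, t, rfl⟩
      simp only [ContinuousLinearMap.comp_apply, ContinuousLinearMap.flip_apply,
        ContinuousLinearMap.mul_apply']
      have h3 : (((u s)⁻¹ : unitary B) : B) = star ((u s : B)) := by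
        rw [← Unitary.star_eq_inv]
        exact Unitary.coe_star
      have h1 : ((u (s * t * s⁻¹) : unitary B) : B)
          = (u s : B) * ((u t : B) * star (u s : B)) := by
        have h2 : u (s * t * s⁻¹) = u s * u t * (u s)⁻¹ := by
          rw [map_mul, map_mul, map_inv]
        rw [h2]
        calc ((u s * u t * (u s)⁻¹ : unitary B) : B)
            = (u s : B) * (u t : B) * (((u s)⁻¹ : unitary B) : B) := rfl
          _ = (u s : B) * ((u t : B) * star ((u s : B))) := by rw [h3, mul_assoc]
      have hkey : (u s : B) * (a * (u t : B)) * star ((u s : B))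
          = ((u s : B) * a * star ((u s : B))) * ((u (s * t * s⁻¹) : unitary B) : B) := by
        rw [h1]
        simp only [mul_assoc]
        rw [hcanc]
      by_cases ht : t = 1
      · subst ht
        have hst : s * 1 * s⁻¹ = 1 := by group
        rw [hkey, hst, hEe _ (hβmem s a ha), hEe a ha]
      · have hst : s * t * s⁻¹ ≠ 1 := fun h => ht (conj_eq_one_iff.mp h)
        rw [hkey, hEt _ (hβmem s a ha) _ hst, hEt a ha t ht, mul_zero, zero_mul]
    intro x
    have := congrFun (congrArg (fun (f : B →L[ℂ] B) => (f : B → B)) heq) x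
    simpa using this
  -- ### E and averaging operators
  have hEapp : ∀ (Ψ : Avg A) (x : B), E (Ψ.app x) = Ψ.app (E x) := by
    intro Ψ x
    rw [Avg.app, Avg.app, map_sum]
    refine Finset.sum_congr rfl fun i hi => ?_
    rw [← Complex.coe_smul, map_smul, Complex.coe_smul]
    congr 1
    exact hbimod _ (Ψ.hvA i hi) _ (star_mem (Ψ.hvA i hi)) x
  have hEappL : ∀ (L : List (Avg A)) (x : B), E (appList L x) = appList L (E x) := by
    intro L
    induction L with
    | nil => exact fun x => rfl
    | cons Ψ L ih =>
      intro x
      rw [appList_cons, appList_cons, ih, hEapp]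
  have hδL : ∀ (L : List (Avg A)) (x : B),
      ‖appList L x - E (appList L x)‖ ≤ ‖x - E x‖ := by
    intro L x
    rw [hEappL, ← appList_sub]
    exact appList_norm_le L _
  -- ### the key commutation identity for generators
  have hgen : ∀ (Ψ : Avg A) (b : B) (t : Γ),
      Ψ.app (b * (u t : B)) =
      (∑ i ∈ Ψ.t, Ψ.w i • (Ψ.v i * b * ((u t : B) * star (Ψ.v i) * star (u t : B)))) * (u t : B) := by
    intro Ψ b t
    rw [Avg.app, Finset.sum_mul]
    refine Finset.sum_congr rfl fun i hi => ?_
    rw [smul_mul_assoc]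
    congr 1
    simp only [mul_assoc, hstar_mul t, mul_one]
  have hgenA : ∀ (Ψ : Avg A) (b : B), b ∈ A → ∀ t : Γ,
      (∑ i ∈ Ψ.t, Ψ.w i • (Ψ.v i * b * ((u t : B) * star (Ψ.v i) * star (u t : B)))) ∈ A := by
    intro Ψ b hb t
    refine sum_mem fun i hi => ?_
    rw [← Complex.coe_smul]
    exact A.smul_mem (mul_mem (mul_mem (Ψ.hvA i hi) hb) (hβmem t _ (star_mem (Ψ.hvA i hi)))) _
  have hgenL : ∀ (L : List (Avg A)) (b : B), b ∈ A → ∀ t : Γ,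
      ∃ c ∈ A, appList L (b * (u t : B)) = c * (u t : B) := by
    intro L
    induction L with
    | nil => exact fun b hb t => ⟨b, hb, rfl⟩
    | cons Ψ L ih =>
      intro b hb t
      rw [appList_cons, hgen]
      exact ih _ (hgenA Ψ b hb t) t
  -- ### extraction of an averaging operator from (SAveP)
  have havg : ∀ t : Γ, t ≠ 1 → ∀ b : B, b ∈ A → ∀ ε : ℝ, 0 < ε →
      ∃ Ψ : Avg A, ‖Ψ.app (b * (u t : B))‖ < ε := by
    intro t ht b hb ε hε
    have h0 := hSAveP t ht b hb
    rw [relC, Metric.mem_closure_iff] at h0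
    obtain ⟨c, hc, hdist⟩ := h0 ε hε
    rw [dist_zero_left] at hdist
    rw [convexHull_eq] at hc
    obtain ⟨ι, s, w, z, hw, hsum, hz, hcm⟩ := hc
    let V : ι → ↥A := fun i => if h : i ∈ s then (hz i h).choose else 1
    have hVu : ∀ i ∈ s, V i ∈ unitary ↥A := fun i h => by
      simp only [V, dif_pos h]; exact (hz i h).choose_spec.1
    have hVz : ∀ i ∈ s, z i = (V i : B) * b * star ((α t (V i) : ↥A) : B) := fun i h => by
      simp only [V, dif_pos h]; exact (hz i h).choose_spec.2
    refine ⟨⟨ι, s, w, fun i => (V i : B), hw, hsum, fun i _ => (V i).2,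
      fun i hi => coe_mem_unitary _ (hVu i hi)⟩, ?_⟩
    have happ : Avg.app ⟨ι, s, w, fun i => (V i : B), hw, hsum, fun i _ => (V i).2,
        fun i hi => coe_mem_unitary _ (hVu i hi)⟩ (b * (u t : B)) = c * (u t : B) := by
      rw [hgen]
      congr 1
      rw [← hcm, Finset.centerMass_eq_of_sum_1 _ _ hsum]
      refine Finset.sum_congr rfl fun i hi => ?_
      congr 1
      rw [hVz i hi]
      congr 1
      rw [hαu t (V i)]
      simp only [star_mul, star_star, mul_assoc]
    rw [happ]
    calc ‖c * (u t : B)‖ ≤ ‖c‖ * ‖(u t : B)‖ := norm_mul_le _ _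
      _ = ‖c‖ := by rw [CStarRing.norm_coe_unitary (u t), mul_one]
      _ < ε := hdist
  -- ### the main averaging estimate on the dense span
  have key0 : ∀ y ∈ Submodule.span ℂ {x : B | ∃ a ∈ A, ∃ t : Γ, x = a * (u t : B)},
      ∀ L₀ : List (Avg A), ∀ ε : ℝ, 0 < ε →
      ∃ L : List (Avg A),
        ‖appList L (appList L₀ y) - E (appList L (appList L₀ y))‖ < ε := by
    intro y hy
    induction hy using Submodule.span_induction with
    | mem x hx =>
      obtain ⟨a, ha, t, rfl⟩ := hx
      intro L₀ ε hε
      obtain ⟨c, hcA, hc⟩ := hgenL L₀ a ha t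
      rw [hc]
      by_cases ht : t = 1
      · subst ht
        refine ⟨[], ?_⟩
        rw [appList_nil, hu1, mul_one, hEA c hcA, sub_self, norm_zero]
        exact hε
      · obtain ⟨Ψ, hΨ⟩ := havg t ht c hcA ε hε
        refine ⟨[Ψ], ?_⟩
        rw [appList_cons, appList_nil]
        rw [hgen] at hΨ ⊢
        rw [hEt _ (hgenA Ψ c hcA t) t ht, sub_zero]
        exact hΨ
    | zero =>
      intro L₀ ε hε
      refine ⟨[], ?_⟩
      rw [appList_nil, appList_zero, map_zero, sub_self, norm_zero]
      exact hε
    | add x y hxs hys hx hy =>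
      intro L₀ ε hε
      obtain ⟨L₁, h1⟩ := hx L₀ (ε / 2) (by positivity)
      obtain ⟨L₂, h2⟩ := hy (L₀ ++ L₁) (ε / 2) (by positivity)
      refine ⟨L₁ ++ L₂, ?_⟩
      have hsplit : appList (L₁ ++ L₂) (appList L₀ (x + y))
            - E (appList (L₁ ++ L₂) (appList L₀ (x + y)))
          = (appList (L₁ ++ L₂) (appList L₀ x) - E (appList (L₁ ++ L₂) (appList L₀ x)))
            + (appList (L₁ ++ L₂) (appList L₀ y) - E (appList (L₁ ++ L₂) (appList L₀ y))) := by
        rw [appList_add, appList_add, map_add]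
        abel
      rw [hsplit]
      have e1 : ‖appList (L₁ ++ L₂) (appList L₀ x) - E (appList (L₁ ++ L₂) (appList L₀ x))‖
          ≤ ‖appList L₁ (appList L₀ x) - E (appList L₁ (appList L₀ x))‖ := by
        rw [appList_append]
        exact hδL L₂ _
      have e2 : appList (L₁ ++ L₂) (appList L₀ y) = appList L₂ (appList (L₀ ++ L₁) y) := by
        rw [appList_append, appList_append]
      have e2' : ‖appList (L₁ ++ L₂) (appList L₀ y) - E (appList (L₁ ++ L₂) (appList L₀ y))‖
          < ε / 2 := by
        rw [e2]; exact h2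
      refine lt_of_le_of_lt (norm_add_le _ _) ?_
      have := le_trans e1 (le_of_lt h1)
      linarith
    | smul c x hxs hx =>
      intro L₀ ε hε
      obtain ⟨L, hL⟩ := hx L₀ (ε / (‖c‖ + 1)) (by positivity)
      refine ⟨L, ?_⟩
      have hsm : appList L (appList L₀ (c • x)) - E (appList L (appList L₀ (c • x)))
          = c • (appList L (appList L₀ x) - E (appList L (appList L₀ x))) := by
        rw [appList_smul, appList_smul, map_smul, smul_sub]
      rw [hsm, norm_smul]
      have hlt : ‖c‖ * ‖appList L (appList L₀ x) - E (appList L (appList L₀ x))‖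
          ≤ ‖c‖ * (ε / (‖c‖ + 1)) :=
        mul_le_mul_of_nonneg_left (le_of_lt hL) (norm_nonneg c)
      refine lt_of_le_of_lt hlt ?_
      have hc1 : ‖c‖ < ‖c‖ + 1 := lt_add_one _
      have hd : 0 < ε / (‖c‖ + 1) := by positivity
      calc ‖c‖ * (ε / (‖c‖ + 1)) < (‖c‖ + 1) * (ε / (‖c‖ + 1)) :=
            mul_lt_mul_of_pos_right hc1 hd
        _ = ε := by field_simp
  -- ### the averaging estimate for every element of B
  have key : ∀ y : B, ∀ ε : ℝ, 0 < ε →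
      ∃ L : List (Avg A), ‖appList L y - E (appList L y)‖ < ε := by
    intro y ε hε
    have hy := hdense y
    rw [Metric.mem_closure_iff] at hy
    obtain ⟨y', hy', hdist⟩ := hy (ε / 4) (by positivity)
    obtain ⟨L, hL⟩ := key0 y' hy' [] (ε / 2) (by positivity)
    rw [appList_nil] at hL
    refine ⟨L, ?_⟩
    have hsplit : appList L y - E (appList L y)
        = (appList L y' - E (appList L y'))
          + (appList L (y - y') - E (appList L (y - y'))) := by
      rw [appList_sub, map_sub]
      abel
    have h2 : ‖appList L (y - y') - E (appList L (y - y'))‖ ≤ 2 * ‖y - y'‖ := by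
      refine le_trans (norm_sub_le _ _) ?_
      have hn : ‖appList L (y - y')‖ ≤ ‖y - y'‖ := appList_norm_le L _
      have hEb : ‖E (appList L (y - y'))‖ ≤ ‖appList L (y - y')‖ := by
        calc ‖E (appList L (y - y'))‖ ≤ ‖E‖ * ‖appList L (y - y')‖ := E.le_opNorm _
          _ ≤ 1 * ‖appList L (y - y')‖ :=
              mul_le_mul_of_nonneg_right hEnorm (norm_nonneg _)
          _ = ‖appList L (y - y')‖ := one_mul _
      linarith
    have hyy : ‖y - y'‖ < ε / 4 := by rw [← dist_eq_norm]; exact hdist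
    rw [hsplit]
    refine lt_of_le_of_lt (norm_add_le _ _) ?_
    linarith
  -- ### the ideal J, viewed inside B
  let Jsub : Submodule ℂ B :=
    { carrier := Subtype.val '' (J : Set ↥D)
      add_mem' := by
        rintro _ _ ⟨x, hx, rfl⟩ ⟨y, hy, rfl⟩
        exact ⟨x + y, J.add_mem hx hy, rfl⟩
      zero_mem' := ⟨0, J.zero_mem, rfl⟩
      smul_mem' := by
        rintro c _ ⟨x, hx, rfl⟩
        refine ⟨c • x, ?_, rfl⟩
        rw [Algebra.smul_def]
        exact J.mul_mem_left _ _ hx }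
  have hJl : ∀ b : B, b ∈ D → ∀ x ∈ Jsub, b * x ∈ Jsub := by
    rintro b hb _ ⟨x, hx, rfl⟩
    exact ⟨⟨b, hb⟩ * x, J.mul_mem_left _ _ hx, rfl⟩
  have hJr : ∀ b : B, b ∈ D → ∀ x ∈ Jsub, x * b ∈ Jsub := by
    rintro b hb _ ⟨x, hx, rfl⟩
    exact ⟨x * ⟨b, hb⟩, J.mul_mem_right _ _ hx, rfl⟩
  have hJsmulR : ∀ (r : ℝ), ∀ x ∈ Jsub, r • x ∈ Jsub := by
    intro r x hx
    rw [← Complex.coe_smul]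
    exact Jsub.smul_mem _ hx
  have hJapp : ∀ (Ψ : Avg A), ∀ x ∈ Jsub, Ψ.app x ∈ Jsub := by
    intro Ψ x hx
    rw [Avg.app]
    refine Submodule.sum_mem _ fun i hi => hJsmulR _ _ ?_
    exact hJr _ (hAD (star_mem (Ψ.hvA i hi))) _ (hJl _ (hAD (Ψ.hvA i hi)) x hx)
  have hJappL : ∀ (L : List (Avg A)), ∀ x ∈ Jsub, appList L x ∈ Jsub := by
    intro L
    induction L with
    | nil => exact fun x hx => hx
    | cons Ψ L ih => exact fun x hx => ih _ (hJapp Ψ x hx)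
  -- ### a nonzero positive element of J with nonzero expectation
  obtain ⟨x₀, hx₀J, hx₀ne⟩ : ∃ x : ↥D, x ∈ J ∧ x ≠ 0 := by
    by_contra h
    push_neg at h
    exact hJbot (SetLike.ext fun z =>
      ⟨fun hz => h z hz,
       fun hz => by rw [show z = (0 : ↥D) from hz]; exact J.zero_mem⟩)
  have hy₀J : (star x₀ * x₀ : ↥D) ∈ J := J.mul_mem_left _ _ hx₀J
  have hy₀B : ((star x₀ * x₀ : ↥D) : B) ∈ Jsub := ⟨_, hy₀J, rfl⟩
  have hEy₀ : E ((star x₀ * x₀ : ↥D) : B) ≠ 0 := by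
    intro h
    apply hx₀ne
    have hco : ((star x₀ * x₀ : ↥D) : B) = star (x₀ : B) * (x₀ : B) := by
      push_cast
      rfl
    rw [hco] at h
    exact Subtype.ext (hEfaithful _ h)
  -- ### the ideal I = closure {E x : x ∈ J} of A
  let Ssub : Submodule ℂ ↥A :=
    { carrier := {a : ↥A | ∃ x ∈ Jsub, E x = (a : B)}
      add_mem' := by
        rintro a b ⟨x, hx, hx'⟩ ⟨y, hy, hy'⟩
        refine ⟨x + y, Jsub.add_mem hx hy, ?_⟩
        rw [map_add, hx', hy']
        rfl
      zero_mem' := ⟨0, Jsub.zero_mem, by simp⟩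
      smul_mem' := by
        rintro c a ⟨x, hx, hx'⟩
        refine ⟨c • x, Jsub.smul_mem c hx, ?_⟩
        rw [map_smul, hx']
        rfl }
  have hSl : ∀ (c : ↥A), Set.MapsTo (fun a : ↥A => c * a) Ssub Ssub := by
    rintro c a ⟨x, hx, hx'⟩
    refine ⟨(c : B) * x, hJl _ (hAD c.2) x hx, ?_⟩
    show E ((c : B) * x) = ((c * a : ↥A) : B)
    rw [hbimodL _ c.2, hx']
    rfl
  have hSr : ∀ (c : ↥A), Set.MapsTo (fun a : ↥A => a * c) Ssub Ssub := by
    rintro c a ⟨x, hx, hx'⟩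
    refine ⟨x * (c : B), hJr _ (hAD c.2) x hx, ?_⟩
    show E (x * (c : B)) = ((a * c : ↥A) : B)
    have := hbimod 1 (one_mem A) _ c.2 x
    rw [one_mul, one_mul] at this
    rw [this, hx']
    rfl
  have hadd : ∀ {a b : ↥A}, a ∈ closure (Ssub : Set ↥A) → b ∈ closure (Ssub : Set ↥A) →
      a + b ∈ closure (Ssub : Set ↥A) := fun ha hb =>
    map_mem_closure₂ continuous_add ha hb fun x hx y hy => Ssub.add_mem hx hy
  have hneg : ∀ {a : ↥A}, a ∈ closure (Ssub : Set ↥A) → -a ∈ closure (Ssub : Set ↥A) :=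
    fun ha => map_mem_closure continuous_neg ha fun x hx => Ssub.neg_mem hx
  have hmulL : ∀ {c a : ↥A}, a ∈ closure (Ssub : Set ↥A) → c * a ∈ closure (Ssub : Set ↥A) :=
    fun {c a} ha => map_mem_closure (continuous_const.mul continuous_id) ha (hSl c)
  have hmulR : ∀ {a c : ↥A}, a ∈ closure (Ssub : Set ↥A) → a * c ∈ closure (Ssub : Set ↥A) :=
    fun {a c} ha => map_mem_closure (f := fun y : ↥A => y * c) (continuous_id.mul continuous_const) ha (hSr c)
  let I : TwoSidedIdeal ↥A := TwoSidedIdeal.mk' (closure (Ssub : Set ↥A))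
    (subset_closure Ssub.zero_mem) hadd hneg hmulL hmulR
  have hmemI : ∀ a : ↥A, a ∈ I ↔ a ∈ closure (Ssub : Set ↥A) := fun a =>
    TwoSidedIdeal.mem_mk' _ _ _ _ _ _ a
  have hIclosed : IsClosed (I : Set ↥A) := by
    have hcoe : (I : Set ↥A) = closure (Ssub : Set ↥A) :=
      TwoSidedIdeal.coe_mk' _ _ _ _ _ _
    rw [hcoe]
    exact isClosed_closure
  have hIinv : ∀ s ∈ Λ, ∀ x : ↥A, x ∈ I → α s x ∈ I := by
    intro s hs x hx
    rw [hmemI] at hx ⊢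
    have hcont : Continuous (⇑(α s) : ↥A → ↥A) := by
      have hfun : (⇑(α s) : ↥A → ↥A)
          = fun a => ⟨(u s : B) * (a : B) * star (u s : B), hβmem s _ a.2⟩ := by
        funext a
        exact Subtype.ext (hαu s a)
      rw [hfun]
      exact Continuous.subtype_mk
        ((continuous_const.mul continuous_subtype_val).mul continuous_const) _
    refine map_mem_closure hcont hx ?_
    rintro a ⟨x', hx', hEx⟩
    refine ⟨(u s : B) * x' * star (u s : B), hJr _ ?_ _ (hJl _ (hUD s hs) x' hx'), ?_⟩
    · rw [hUstar s]
      exact hUD s⁻¹ (Λ.inv_mem hs)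
    · show E ((u s : B) * x' * star (u s : B)) = ((α s a : ↥A) : B)
      rw [hconj s x', hEx]
      exact (hαu s a).symm
  have hIne : I ≠ ⊥ := by
    intro h
    have hmem : (⟨E ((star x₀ * x₀ : ↥D) : B), hEmem _⟩ : ↥A) ∈ I :=
      (hmemI _).mpr (subset_closure ⟨_, hy₀B, rfl⟩)
    rw [h, TwoSidedIdeal.mem_bot] at hmem
    exact hEy₀ (by simpa using congrArg Subtype.val hmem)
  have hItop : I = ⊤ := (hmin I hIclosed hIinv).resolve_left hIne
  have h1I : (1 : ↥A) ∈ closure (Ssub : Set ↥A) := by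
    have : (1 : ↥A) ∈ I := by rw [hItop]; exact TwoSidedIdeal.mem_top _
    rwa [hmemI] at this
  rw [Metric.mem_closure_iff] at h1I
  obtain ⟨a', ha'S, ha'dist⟩ := h1I (1/2) (by norm_num)
  obtain ⟨z₀, hz₀J, hz₀E⟩ := ha'S
  have hz₀1 : ‖E z₀ - 1‖ < 1/2 := by
    have hdd : dist (1 : ↥A) a' = ‖E z₀ - (1 : B)‖ := by
      rw [dist_eq_norm]
      calc ‖(1 : ↥A) - a'‖ = ‖(((1 : ↥A) - a' : ↥A) : B)‖ := rfl
        _ = ‖(1 : B) - (a' : B)‖ := by push_cast; ring_nf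
        _ = ‖(1 : B) - E z₀‖ := by rw [hz₀E]
        _ = ‖E z₀ - (1 : B)‖ := norm_sub_rev _ _
    rw [← hdd]
    exact ha'dist
  -- ### conclusion: averaging pushes z₀ to an invertible element of J
  obtain ⟨L, hL⟩ := key z₀ (1/4) (by norm_num)
  have hwJ : appList L z₀ ∈ Jsub := hJappL L z₀ hz₀J
  have hEw1 : ‖E (appList L z₀) - 1‖ ≤ ‖E z₀ - 1‖ := by
    rw [hEappL]
    calc ‖appList L (E z₀) - 1‖ = ‖appList L (E z₀) - appList L 1‖ := by rw [appList_one]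
      _ = ‖appList L (E z₀ - 1)‖ := by rw [appList_sub]
      _ ≤ ‖E z₀ - 1‖ := appList_norm_le L _
  have hw1 : ‖appList L z₀ - 1‖ < 1 := by
    have hsplit : appList L z₀ - 1
        = (appList L z₀ - E (appList L z₀)) + (E (appList L z₀) - 1) := by abel
    rw [hsplit]
    refine lt_of_le_of_lt (norm_add_le _ _) ?_
    have h5 := lt_of_le_of_lt hEw1 hz₀1
    linarith
  obtain ⟨wD, hwDJ, hwDco⟩ := hwJ
  haveI : CompleteSpace ↥D := hD.completeSpace_coe
  have hnormD : ‖(1 : ↥D) - wD‖ < 1 := by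
    have hco : (((1 : ↥D) - wD : ↥D) : B) = 1 - appList L z₀ := by
      rw [← hwDco]
      push_cast
      ring_nf
    calc ‖(1 : ↥D) - wD‖ = ‖(((1 : ↥D) - wD : ↥D) : B)‖ := rfl
      _ = ‖1 - appList L z₀‖ := by rw [hco]
      _ = ‖appList L z₀ - 1‖ := norm_sub_rev _ _
      _ < 1 := hw1
  let Uu : (↥D)ˣ := Units.oneSub ((1 : ↥D) - wD) hnormD
  have hUu : (Uu : ↥D) = wD := sub_sub_cancel 1 wD
  have h1J : (1 : ↥D) ∈ J := by
    have hm : ((Uu⁻¹ : (↥D)ˣ) : ↥D) * ((Uu : (↥D)ˣ) : ↥D) ∈ J :=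
      J.mul_mem_left _ _ (by rw [hUu]; exact hwDJ)
    rwa [Units.inv_mul] at hm
  refine SetLike.ext fun z => ⟨fun _ => TwoSidedIdeal.mem_top _, fun _ => ?_⟩
  have hz := J.mul_mem_left z 1 h1J
  simpa using hz
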